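/- The epigraph of the Kalman-update map f(Σ) = Σ Cᵀ (C Σ Cᵀ + R)⁻¹ C Σ, i.e. the set {(Σ, X) : Σ ≻ 0, X ⪰ f(Σ)}, is a convex subset of the space of pairs of symmetric matrices. -/

import Mathlib

open Matrix

private lemma psd_smul {k : Type*} [Fintype k] {t : ℝ} (ht : 0 ≤ t) {A : Matrix k k ℝ}
    (hA : A.PosSemidef) : (t • A).PosSemidef := by
  refine PosSemidef.of_dotProduct_mulVec_nonneg ?_ fun x => ?_
  · rw [IsHermitian, conjTranspose_smul, hA.1.eq]; simp
  · rw [smul_mulVec, dotProduct_smul, smul_eq_mul]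
    exact mul_nonneg ht (hA.dotProduct_mulVec_nonneg x)

private lemma posDef_combo {k : ℕ} {t s : ℝ} (ht : 0 ≤ t) (hs : 0 ≤ s) (hts : t + s = 1)
    {A B : Matrix (Fin k) (Fin k) ℝ} (hA : A.PosDef) (hB : B.PosDef) :
    (t • A + s • B).PosDef := by
  refine PosDef.of_dotProduct_mulVec_pos ?_ fun x hx => ?_
  · rw [IsHermitian, conjTranspose_add, conjTranspose_smul, conjTranspose_smul,
      hA.1.eq, hB.1.eq]; simp
  · rw [add_mulVec, dotProduct_add, smul_mulVec, smul_mulVec,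
      dotProduct_smul, dotProduct_smul, smul_eq_mul, smul_eq_mul]
    rcases lt_or_eq_of_le ht with ht' | ht'
    · exact add_pos_of_pos_of_nonneg (mul_pos ht' (hA.dotProduct_mulVec_pos hx))
        (mul_nonneg hs (hB.dotProduct_mulVec_pos hx).le)
    · have hs1 : s = 1 := by linarith
      rw [← ht', hs1]; simpa using hB.dotProduct_mulVec_pos hx

/-- The epigraph `{(Σ, X) : Σ ≻ 0, X ⪰ f(Σ)}` of the Kalman-update map
`f(Σ) = Σ Cᵀ (C Σ Cᵀ + R)⁻¹ C Σ` is convex. -/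
theorem kalman_update_epigraph_convex
    {n m : ℕ} (C : Matrix (Fin m) (Fin n) ℝ) (R : Matrix (Fin m) (Fin m) ℝ)
    (hR : R.PosDef)
    (f : Matrix (Fin n) (Fin n) ℝ → Matrix (Fin n) (Fin n) ℝ)
    (hf : ∀ S, f S = S * Cᵀ * (C * S * Cᵀ + R)⁻¹ * (C * S))
    (epi : Set (Matrix (Fin n) (Fin n) ℝ × Matrix (Fin n) (Fin n) ℝ))
    (hepi : epi = {p | p.1.PosDef ∧ (p.2 - f p.1).PosSemidef}) :
    Convex ℝ epi := by
  subst hepi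
  -- the key Schur-complement characterization
  have key : ∀ (S X : Matrix (Fin n) (Fin n) ℝ), S.PosDef →
      ((X - f S).PosSemidef ↔
        (fromBlocks (C * S * Cᵀ + R) (C * S) ((C * S)ᴴ) X).PosSemidef) := by
    intro S X hS
    have hCS : (C * S * Cᵀ).PosSemidef := by
      have := hS.posSemidef.mul_mul_conjTranspose_same C
      simpa using this
    have hA : (C * S * Cᵀ + R).PosDef := Matrix.PosDef.posSemidef_add hCS hR
    haveI := hA.isUnit.invertible
    rw [PosDef.fromBlocks₁₁ (C * S) X hA]
    have hBH : (C * S)ᴴ = S * Cᵀ := by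
      rw [conjTranspose_mul, hS.1.eq]
      simp
    rw [hBH, ← hf S]
  rintro ⟨S₁, X₁⟩ ⟨hS₁, hX₁⟩ ⟨S₂, X₂⟩ ⟨hS₂, hX₂⟩ t s ht hs hts
  simp only [Prod.smul_mk, Prod.mk_add_mk] at *
  have hSD : (t • S₁ + s • S₂).PosDef := posDef_combo ht hs hts hS₁ hS₂
  refine ⟨hSD, ?_⟩
  rw [key _ _ hSD]
  have hM : fromBlocks (C * (t • S₁ + s • S₂) * Cᵀ + R) (C * (t • S₁ + s • S₂))
        ((C * (t • S₁ + s • S₂))ᴴ) (t • X₁ + s • X₂)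
      = t • fromBlocks (C * S₁ * Cᵀ + R) (C * S₁) ((C * S₁)ᴴ) X₁
        + s • fromBlocks (C * S₂ * Cᵀ + R) (C * S₂) ((C * S₂)ᴴ) X₂ := by
    have hRst : t • R + s • R = R := by rw [← add_smul, hts, one_smul]
    have h2 : C * (t • S₁ + s • S₂) = t • (C * S₁) + s • (C * S₂) := by
      rw [Matrix.mul_add, Matrix.mul_smul, Matrix.mul_smul]
    have h1 : C * (t • S₁ + s • S₂) * Cᵀ + R
        = t • (C * S₁ * Cᵀ + R) + s • (C * S₂ * Cᵀ + R) := by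
      rw [h2, Matrix.add_mul, Matrix.smul_mul, Matrix.smul_mul, smul_add, smul_add,
        add_add_add_comm, hRst]
    have h3 : (t • (C * S₁) + s • (C * S₂))ᴴ = t • (C * S₁)ᴴ + s • (C * S₂)ᴴ := by simp
    rw [fromBlocks_smul, fromBlocks_smul, fromBlocks_add, h1, h2, h3]
  rw [hM]
  exact ((psd_smul ht ((key _ _ hS₁).mp hX₁)).add (psd_smul hs ((key _ _ hS₂).mp hX₂)))
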